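/- Let G be a 4-regular simple graph on n ≥ 4 vertices whose edge set is partitioned into a family 𝒯 of triangles (3-cycles), and let C be a Hamilton cycle of G. Let τ_2 be the number of triangles of 𝒯 containing exactly two edges of C. Then 3·τ_2 ≥ n. -/

import Mathlib

/-- `T` is (the edge set of) a triangle of `G`: three pairwise distinct, pairwise adjacent
vertices, with `T` consisting of the three edges between them. -/
def IsTriangleEdgeSet {V : Type*} [DecidableEq V] (G : SimpleGraph V)
    (T : Finset (Sym2 V)) : Prop :=
  ∃ a b c : V, a ≠ b ∧ a ≠ c ∧ b ≠ c ∧ G.Adj a b ∧ G.Adj b c ∧ G.Adj a c ∧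
    T = {s(a, b), s(b, c), s(a, c)}

/-- The edge set of `G` is partitioned into the family `𝒯` of triangles: every member of
`𝒯` is a triangle of `G`, and every edge of `G` lies in exactly one member of `𝒯`. -/
def IsTrianglePartition {V : Type*} [Fintype V] [DecidableEq V] (G : SimpleGraph V)
    [DecidableRel G.Adj] (𝒯 : Finset (Finset (Sym2 V))) : Prop :=
  (∀ T ∈ 𝒯, IsTriangleEdgeSet G T) ∧
  (∀ e ∈ G.edgeFinset, ∃! T, T ∈ 𝒯 ∧ e ∈ T)

open SimpleGraph Finset

lemma countP_or_split {α : Type*} (p q : α → Prop) [DecidablePred p] [DecidablePred q] :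
    ∀ l : List α, (∀ x ∈ l, ¬(p x ∧ q x)) →
      l.countP (fun x => p x ∨ q x) = l.countP p + l.countP q := by
  intro l
  induction l with
  | nil => simp
  | cons a l ih =>
    intro h
    have ha := h a List.mem_cons_self
    rw [List.countP_cons, List.countP_cons, List.countP_cons,
      ih (fun x hx => h x (List.mem_cons_of_mem a hx))]
    by_cases hp : p a <;> by_cases hq : q a <;> simp [hp, hq] at ha ⊢ <;> omega

lemma count_dropLast {V : Type*} [DecidableEq V] {G : SimpleGraph V} {u : V} {C : G.Walk u u}
    (hC : C.IsHamiltonianCycle) (v : V) : C.support.dropLast.count v = 1 := by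
  have hne : C.support ≠ [] := C.support_ne_nil
  have h1 : C.support.dropLast ++ [C.support.getLast hne] = C.support :=
    List.dropLast_append_getLast hne
  rw [C.getLast_support] at h1
  have h2 := congrArg (List.count v) h1
  rw [List.count_append] at h2
  by_cases hv : v = u
  · subst hv
    rw [hC.count_support_self] at h2
    simpa using h2
  · rw [hC.support_count_of_ne (Ne.symm hv)] at h2
    simpa [List.count_singleton, hv, Ne.symm hv] using h2

lemma count_tail {V : Type*} [DecidableEq V] {G : SimpleGraph V} {u : V} {C : G.Walk u u}
    (hC : C.IsHamiltonianCycle) (v : V) : C.support.tail.count v = 1 := by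
  rw [← SimpleGraph.Walk.support_tail_of_not_nil C hC.isCycle.not_nil]
  exact hC.isHamiltonian_tail v

lemma cycle_incidence {V : Type*} [Fintype V] [DecidableEq V] {G : SimpleGraph V} {u : V}
    {C : G.Walk u u} (hC : C.IsHamiltonianCycle) (v : V) :
    (C.edges.toFinset.filter (fun e => v ∈ e)).card = 2 := by
  have hnd : C.edges.Nodup := hC.isCycle.edges_nodup
  have hset : (C.edges.toFinset.filter (fun e => v ∈ e)) =
      (C.edges.filter (fun e => decide (v ∈ e))).toFinset := by
    ext e; simp [List.mem_filter]
  rw [hset, List.toFinset_card_of_nodup (hnd.filter _), ← List.countP_eq_length_filter]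
  show C.edges.countP (fun e => decide (v ∈ e)) = 2
  have hedges : C.edges = C.darts.map SimpleGraph.Dart.edge := rfl
  rw [hedges, List.countP_map]
  have hmem : ∀ d : G.Dart, (v ∈ d.edge) ↔ (v = d.fst ∨ v = d.snd) := by
    intro d; exact Sym2.mem_iff
  have hcongr : C.darts.countP (fun d => decide (v ∈ d.edge)) =
      C.darts.countP (fun d => v = d.fst ∨ v = d.snd) := by
    apply List.countP_congr
    intro d _; simp [hmem d]
  rw [show ((fun e => decide (v ∈ e)) ∘ SimpleGraph.Dart.edge) = (fun d : G.Dart => decide (v ∈ d.edge)) from rfl, hcongr, countP_or_split (fun d => v = d.fst) (fun d => v = d.snd) C.darts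
    (by rintro d _ ⟨h1, h2⟩; exact d.adj.ne (h1 ▸ h2 ▸ rfl))]
  have hf : C.darts.countP (fun d => v = d.fst) = C.support.dropLast.count v := by
    rw [← C.map_fst_darts, List.count_eq_countP, List.countP_map]
    apply List.countP_congr; intro d _
    simp only [decide_eq_true_eq, Function.comp_apply, beq_iff_eq]
    exact eq_comm
  have hs : C.darts.countP (fun d => v = d.snd) = C.support.tail.count v := by
    rw [← C.map_snd_darts, List.count_eq_countP, List.countP_map]
    apply List.countP_congr; intro d _
    simp only [decide_eq_true_eq, Function.comp_apply, beq_iff_eq]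
    exact eq_comm
  rw [hf, hs, count_dropLast hC v, count_tail hC v]


section Tri
variable {V : Type*} [Fintype V] [DecidableEq V] {G : SimpleGraph V} [DecidableRel G.Adj]
  {𝒯 : Finset (Finset (Sym2 V))} {T T' : Finset (Sym2 V)} {e f : Sym2 V}

lemma edge_mem_of_mem_tri (h𝒯 : IsTrianglePartition G 𝒯) (hT : T ∈ 𝒯) (hf : f ∈ T) :
    f ∈ G.edgeFinset := by
  obtain ⟨a, b, c, hab, hac, hbc, h1, h2, h3, rfl⟩ := h𝒯.1 T hT
  simp only [Finset.mem_insert, Finset.mem_singleton] at hf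
  rcases hf with rfl | rfl | rfl <;>
    simp [SimpleGraph.mem_edgeFinset, SimpleGraph.mem_edgeSet, h1, h2, h3]

lemma tri_card (h𝒯 : IsTrianglePartition G 𝒯) (hT : T ∈ 𝒯) : T.card = 3 := by
  obtain ⟨a, b, c, hab, hac, hbc, h1, h2, h3, rfl⟩ := h𝒯.1 T hT
  rw [Finset.card_eq_three]
  refine ⟨s(a, b), s(b, c), s(a, c), ?_, ?_, ?_, rfl⟩ <;>
    simp [Sym2.mk_eq_mk_iff, Prod.ext_iff] <;> tauto

lemma tri_unique (h𝒯 : IsTrianglePartition G 𝒯) (hT : T ∈ 𝒯) (hT' : T' ∈ 𝒯)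
    (hf : f ∈ T) (hf' : f ∈ T') : T = T' := by
  obtain ⟨U, hU, hUuniq⟩ := h𝒯.2 f (edge_mem_of_mem_tri h𝒯 hT hf)
  rw [hUuniq T ⟨hT, hf⟩, hUuniq T' ⟨hT', hf'⟩]

lemma tri_structure (h𝒯 : IsTrianglePartition G 𝒯) (hT : T ∈ 𝒯) (he : e ∈ T) :
    ∃ x y z : V, x ≠ y ∧ x ≠ z ∧ y ≠ z ∧ e = s(x, y) ∧ s(y, z) ∈ T ∧ s(x, z) ∈ T := by
  obtain ⟨a, b, c, hab, hac, hbc, h1, h2, h3, rfl⟩ := h𝒯.1 T hT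
  have m1 : s(a, b) ∈ ({s(a, b), s(b, c), s(a, c)} : Finset (Sym2 V)) := by simp
  have m2 : s(b, c) ∈ ({s(a, b), s(b, c), s(a, c)} : Finset (Sym2 V)) := by simp
  have m3 : s(a, c) ∈ ({s(a, b), s(b, c), s(a, c)} : Finset (Sym2 V)) := by simp
  simp only [Finset.mem_insert, Finset.mem_singleton] at he
  rcases he with rfl | rfl | rfl
  · exact ⟨a, b, c, hab, hac, hbc, rfl, m2, m3⟩
  · refine ⟨b, c, a, hbc, hab.symm, hac.symm, rfl, ?_, ?_⟩
    · have h : s(c, a) = s(a, c) := Sym2.eq_swap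
      rw [h]; exact m3
    · have h : s(b, a) = s(a, b) := Sym2.eq_swap
      rw [h]; exact m1
  · refine ⟨a, c, b, hac, hab, hbc.symm, rfl, ?_, m1⟩
    have h : s(c, b) = s(b, c) := Sym2.eq_swap
    rw [h]; exact m2

end Tri

section NoThree
variable {V : Type*} [Fintype V] [DecidableEq V] {G : SimpleGraph V} {u : V} {C : G.Walk u u}

lemma two_incident_edges (hC : C.IsHamiltonianCycle) {x p q : V} (hpq : p ≠ q)
    (h1 : s(x, p) ∈ C.edges) (h2 : s(x, q) ∈ C.edges) :
    ∀ y : V, s(x, y) ∈ C.edges → y = p ∨ y = q := by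
  intro y hy
  have hsub : ({s(x, p), s(x, q)} : Finset (Sym2 V)) ⊆
      C.edges.toFinset.filter (fun e => x ∈ e) := by
    intro e he
    simp only [Finset.mem_insert, Finset.mem_singleton] at he
    rcases he with rfl | rfl <;> simp [List.mem_toFinset, h1, h2]
  have hne : s(x, p) ≠ s(x, q) := fun h => hpq (Sym2.congr_right.mp h)
  have hcardpair : ({s(x, p), s(x, q)} : Finset (Sym2 V)).card = 2 := Finset.card_pair hne
  have heq : ({s(x, p), s(x, q)} : Finset (Sym2 V)) =
      C.edges.toFinset.filter (fun e => x ∈ e) :=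
    Finset.eq_of_subset_of_card_le hsub (by rw [cycle_incidence hC x, hcardpair])
  have hyIn : s(x, y) ∈ ({s(x, p), s(x, q)} : Finset (Sym2 V)) := by
    rw [heq]; simp [List.mem_toFinset, hy]
  simp only [Finset.mem_insert, Finset.mem_singleton, Sym2.congr_right] at hyIn
  exact hyIn

lemma no_three_edges (hC : C.IsHamiltonianCycle) (hn : 4 ≤ Fintype.card V)
    {a b c : V} (hab : a ≠ b) (hac : a ≠ c) (hbc : b ≠ c)
    (h1 : s(a, b) ∈ C.edges) (h2 : s(b, c) ∈ C.edges) (h3 : s(a, c) ∈ C.edges) : False := by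
  set S : Finset V := {a, b, c} with hS
  have h1' : s(b, a) ∈ C.edges := by
    have h : s(b, a) = s(a, b) := Sym2.eq_swap
    rw [h]; exact h1
  have h2' : s(c, b) ∈ C.edges := by
    have h : s(c, b) = s(b, c) := Sym2.eq_swap
    rw [h]; exact h2
  have h3' : s(c, a) ∈ C.edges := by
    have h : s(c, a) = s(a, c) := Sym2.eq_swap
    rw [h]; exact h3
  have case1 := two_incident_edges hC hbc h1 h3
  have case2 := two_incident_edges hC hac h1' h2
  have case3 := two_incident_edges hC hab.symm h2' h3'
  have key : ∀ x y : V, x ∈ S → s(x, y) ∈ C.edges → y ∈ S := by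
    intro x y hx hxy
    simp only [hS, Finset.mem_insert, Finset.mem_singleton] at hx ⊢
    rcases hx with hx | hx | hx
    · subst hx; rcases case1 y hxy with rfl | rfl <;> tauto
    · subst hx; rcases case2 y hxy with rfl | rfl <;> tauto
    · subst hx; rcases case3 y hxy with rfl | rfl <;> tauto
  have closure : ∀ {x y : V} (p : G.Walk x y), (∀ e ∈ p.edges, e ∈ C.edges) → x ∈ S → y ∈ S := by
    intro x y p
    induction p with
    | nil => exact fun _ h => h
    | cons hadj p ih =>
      intro hsub hx
      exact ih (fun e he => hsub e (List.mem_cons_of_mem _ he))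
        (key _ _ hx (hsub _ List.mem_cons_self))
  have ha : a ∈ C.support := hC.mem_support a
  have huS : u ∈ S := by
    refine closure (C.takeUntil a ha).reverse ?_ (by simp [hS])
    intro e he
    rw [SimpleGraph.Walk.edges_reverse, List.mem_reverse] at he
    exact C.edges_takeUntil_subset ha he
  have hd : ∃ d : V, d ∉ S := by
    by_contra h
    push_neg at h
    have : (Finset.univ : Finset V) ⊆ S := fun d _ => h d
    have hcard := Finset.card_le_card this
    rw [Finset.card_univ] at hcard
    have : S.card ≤ 3 := by
      apply le_trans (Finset.card_insert_le _ _)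
      simp [Finset.card_insert_le, Nat.succ_le_succ, le_trans (Finset.card_insert_le _ _)]
      exact Nat.lt_succ_of_le Finset.card_le_two
    omega
  obtain ⟨d, hdS⟩ := hd
  exact hdS (closure (C.takeUntil d (hC.mem_support d))
    (fun e he => C.edges_takeUntil_subset _ he) huS)

end NoThree

section Master
variable {V : Type*} [Fintype V] [DecidableEq V] {G : SimpleGraph V} [DecidableRel G.Adj]
  {𝒯 : Finset (Finset (Sym2 V))} {E : Finset (Sym2 V)}

/-- Rule 2 relation: `e` is the cycle edge of a 1-triangle `T'` whose apex `m` has both of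
its cycle edges inside the 2-triangle `T`. -/
def QRel (𝒯 : Finset (Finset (Sym2 V))) (E : Finset (Sym2 V))
    (e : Sym2 V) (T : Finset (Sym2 V)) : Prop :=
  ∃ (T' : Finset (Sym2 V)) (a b m : V), T' ∈ 𝒯 ∧ (T' ∩ E).card = 1 ∧ e = s(a, b) ∧ e ∈ T' ∧
    s(a, m) ∈ T' ∧ s(b, m) ∈ T' ∧ m ≠ a ∧ m ≠ b ∧ (E.filter (fun f => m ∈ f)) ⊆ T

lemma adj_of_mem_tri (h𝒯 : IsTrianglePartition G 𝒯) {T : Finset (Sym2 V)} {x y : V}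
    (hT : T ∈ 𝒯) (h : s(x, y) ∈ T) : G.Adj x y := by
  have := edge_mem_of_mem_tri h𝒯 hT h
  rwa [SimpleGraph.mem_edgeFinset, SimpleGraph.mem_edgeSet] at this

lemma apex_nbr (h𝒯 : IsTrianglePartition G 𝒯) (hreg : ∀ v : V, G.degree v = 4)
    (hE : E ⊆ G.edgeFinset) (hI : ∀ v : V, (E.filter (fun f => v ∈ f)).card = 2)
    {T' : Finset (Sym2 V)} {a b m : V} {e : Sym2 V}
    (hT' : T' ∈ 𝒯) (hc1 : (T' ∩ E).card = 1) (he : e = s(a, b)) (heT' : e ∈ T') (heE : e ∈ E)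
    (ham : s(a, m) ∈ T') (hbm : s(b, m) ∈ T') (hma : m ≠ a) (hmb : m ≠ b)
    {w : V} (hw : G.Adj m w) (hwE : s(m, w) ∉ E) : w = a ∨ w = b := by
  have hab : a ≠ b := by
    have := hE heE
    rw [he, SimpleGraph.mem_edgeFinset, SimpleGraph.mem_edgeSet] at this
    exact this.ne
  have hsingle : T' ∩ E = {e} := by
    obtain ⟨x, hx⟩ := Finset.card_eq_one.mp hc1
    have hin : e ∈ T' ∩ E := Finset.mem_inter.mpr ⟨heT', heE⟩
    rw [hx] at hin ⊢
    rw [Finset.mem_singleton] at hin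
    rw [hin]
  have hmaE : s(m, a) ∉ E := by
    intro hmem
    have hswap : s(m, a) = s(a, m) := Sym2.eq_swap
    rw [hswap] at hmem
    have hin : s(a, m) ∈ T' ∩ E := Finset.mem_inter.mpr ⟨ham, hmem⟩
    rw [hsingle, Finset.mem_singleton, he] at hin
    exact hmb (Sym2.congr_right.mp hin)
  have hmbE : s(m, b) ∉ E := by
    intro hmem
    have hswap : s(m, b) = s(b, m) := Sym2.eq_swap
    rw [hswap] at hmem
    have hin : s(b, m) ∈ T' ∩ E := Finset.mem_inter.mpr ⟨hbm, hmem⟩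
    rw [hsingle, Finset.mem_singleton, he] at hin
    have hswap3 : s(a, b) = s(b, a) := Sym2.eq_swap
    rw [hswap3] at hin
    exact hma (Sym2.congr_right.mp hin)
  obtain ⟨f₁, f₂, hf12, hIm⟩ := Finset.card_eq_two.mp (hI m)
  have hf₁ : f₁ ∈ E ∧ m ∈ f₁ := by
    have : f₁ ∈ E.filter (fun f => m ∈ f) := by rw [hIm]; simp
    exact Finset.mem_filter.mp this
  have hf₂ : f₂ ∈ E ∧ m ∈ f₂ := by
    have : f₂ ∈ E.filter (fun f => m ∈ f) := by rw [hIm]; simp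
    exact Finset.mem_filter.mp this
  obtain ⟨x, hx⟩ := Sym2.mem_iff_exists.mp hf₁.2
  obtain ⟨y, hy⟩ := Sym2.mem_iff_exists.mp hf₂.2
  have hxy : x ≠ y := fun h => hf12 (by rw [hx, hy, h])
  have hax : a ≠ x := fun h => hmaE (by rw [h, ← hx]; exact hf₁.1)
  have hay : a ≠ y := fun h => hmaE (by rw [h, ← hy]; exact hf₂.1)
  have hbx : b ≠ x := fun h => hmbE (by rw [h, ← hx]; exact hf₁.1)
  have hby : b ≠ y := fun h => hmbE (by rw [h, ← hy]; exact hf₂.1)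
  have hNcard : (G.neighborFinset m).card = 4 := by
    rw [G.card_neighborFinset_eq_degree]; exact hreg m
  have hma' : G.Adj m a := (adj_of_mem_tri h𝒯 hT' ham).symm
  have hmb' : G.Adj m b := (adj_of_mem_tri h𝒯 hT' hbm).symm
  have hmx : G.Adj m x := by
    have := hE hf₁.1
    rw [hx, SimpleGraph.mem_edgeFinset, SimpleGraph.mem_edgeSet] at this
    exact this
  have hmy : G.Adj m y := by
    have := hE hf₂.1
    rw [hy, SimpleGraph.mem_edgeFinset, SimpleGraph.mem_edgeSet] at this
    exact this
  have hsub : ({a, b, x, y} : Finset V) ⊆ G.neighborFinset m := by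
    intro z hz
    simp only [Finset.mem_insert, Finset.mem_singleton] at hz
    rw [SimpleGraph.mem_neighborFinset]
    rcases hz with rfl | rfl | rfl | rfl
    exacts [hma', hmb', hmx, hmy]
  have hcard4 : ({a, b, x, y} : Finset V).card = 4 := by
    rw [Finset.card_insert_of_notMem (by simp [hab, hax, hay]),
      Finset.card_insert_of_notMem (by simp [hbx, hby]), Finset.card_pair hxy]
  have heqN : ({a, b, x, y} : Finset V) = G.neighborFinset m :=
    Finset.eq_of_subset_of_card_le hsub (by rw [hNcard, hcard4])
  have hwN : w ∈ ({a, b, x, y} : Finset V) := by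
    rw [heqN, SimpleGraph.mem_neighborFinset]; exact hw
  have hwx : w ≠ x := fun h => hwE (by rw [h, ← hx]; exact hf₁.1)
  have hwy : w ≠ y := fun h => hwE (by rw [h, ← hy]; exact hf₂.1)
  simp only [Finset.mem_insert, Finset.mem_singleton] at hwN
  rcases hwN with rfl | rfl | rfl | rfl
  · exact Or.inl rfl
  · exact Or.inr rfl
  · exact absurd rfl hwx
  · exact absurd rfl hwy

lemma single_inter {T' : Finset (Sym2 V)} {e : Sym2 V}
    (hc1 : (T' ∩ E).card = 1) (heT' : e ∈ T') (heE : e ∈ E) : T' ∩ E = {e} := by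
  obtain ⟨x, hx⟩ := Finset.card_eq_one.mp hc1
  have hin : e ∈ T' ∩ E := Finset.mem_inter.mpr ⟨heT', heE⟩
  rw [hx] at hin ⊢
  rw [Finset.mem_singleton] at hin
  rw [hin]

lemma exists_good (h𝒯 : IsTrianglePartition G 𝒯) (hreg : ∀ v : V, G.degree v = 4)
    (hE : E ⊆ G.edgeFinset) (hI : ∀ v : V, (E.filter (fun f => v ∈ f)).card = 2)
    (hno3 : ∀ T ∈ 𝒯, (T ∩ E).card ≠ 3) {e : Sym2 V} (heE : e ∈ E) :
    ∃ T, (T ∈ 𝒯 ∧ (T ∩ E).card = 2) ∧ (e ∈ T ∨ QRel 𝒯 E e T) := by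
  obtain ⟨T₀, ⟨hT₀, heT₀⟩, -⟩ := h𝒯.2 e (hE heE)
  have hk1 : 1 ≤ (T₀ ∩ E).card :=
    Finset.card_pos.mpr ⟨e, Finset.mem_inter.mpr ⟨heT₀, heE⟩⟩
  have hk3 : (T₀ ∩ E).card ≤ 3 :=
    le_trans (Finset.card_le_card Finset.inter_subset_left) (le_of_eq (tri_card h𝒯 hT₀))
  have hne3 := hno3 T₀ hT₀
  have hcases : (T₀ ∩ E).card = 1 ∨ (T₀ ∩ E).card = 2 := by omega
  rcases hcases with hc1 | hc2
  swap
  · exact ⟨T₀, ⟨hT₀, hc2⟩, Or.inl heT₀⟩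
  obtain ⟨x, y, z, hxy, hxz, hyz, hexy, hyzT, hxzT⟩ := tri_structure h𝒯 hT₀ heT₀
  have hze : z ∉ e := by
    rw [hexy, Sym2.mem_iff]
    rintro (rfl | rfl)
    exacts [hxz rfl, hyz rfl]
  obtain ⟨f₁, f₂, hf12, hIm⟩ := Finset.card_eq_two.mp (hI z)
  have hf₁ : f₁ ∈ E ∧ z ∈ f₁ := Finset.mem_filter.mp (show f₁ ∈ E.filter (fun f => z ∈ f) by rw [hIm]; simp)
  have hf₂ : f₂ ∈ E ∧ z ∈ f₂ := Finset.mem_filter.mp (show f₂ ∈ E.filter (fun f => z ∈ f) by rw [hIm]; simp)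
  obtain ⟨T₁, ⟨hT₁, hf₁T₁⟩, -⟩ := h𝒯.2 f₁ (hE hf₁.1)
  obtain ⟨p, q, r, hpq, hpr, hqr, hf₁pq, hqrT₁, hprT₁⟩ := tri_structure h𝒯 hT₁ hf₁T₁
  have hzpq : z = p ∨ z = q := by
    have := hf₁.2
    rw [hf₁pq, Sym2.mem_iff] at this
    exact this
  obtain ⟨w₁, w₂, hw12, hzw2, hf₁', hzw₂T₁⟩ :
      ∃ w₁ w₂ : V, w₁ ≠ w₂ ∧ z ≠ w₂ ∧ f₁ = s(z, w₁) ∧ s(z, w₂) ∈ T₁ := by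
    rcases hzpq with rfl | rfl
    · exact ⟨q, r, hqr, hpr, hf₁pq, hprT₁⟩
    · refine ⟨p, r, hpr, hqr, ?_, hqrT₁⟩
      rw [hf₁pq]; exact Sym2.eq_swap.symm
  have hf₂T₁ : f₂ ∈ T₁ := by
    by_cases hcase : s(z, w₂) ∈ E
    · have hmem : s(z, w₂) ∈ E.filter (fun f => z ∈ f) :=
        Finset.mem_filter.mpr ⟨hcase, by simp⟩
      rw [hIm] at hmem
      simp only [Finset.mem_insert, Finset.mem_singleton] at hmem
      rcases hmem with hmem | hmem
      · exact absurd (Sym2.congr_right.mp (hmem.trans hf₁')) (Ne.symm hw12)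
      · rw [← hmem]; exact hzw₂T₁
    · have hadj : G.Adj z w₂ := adj_of_mem_tri h𝒯 hT₁ hzw₂T₁
      have hw2xy := apex_nbr h𝒯 hreg hE hI hT₀ hc1 hexy heT₀ heE hxzT hyzT
        (Ne.symm hxz) (Ne.symm hyz) hadj hcase
      have hzw₂T₀ : s(z, w₂) ∈ T₀ := by
        rcases hw2xy with rfl | rfl
        · have h : s(z, w₂) = s(w₂, z) := Sym2.eq_swap
          rw [h]; exact hxzT
        · have h : s(z, w₂) = s(w₂, z) := Sym2.eq_swap
          rw [h]; exact hyzT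
      have hT₀₁ : T₀ = T₁ := tri_unique h𝒯 hT₀ hT₁ hzw₂T₀ hzw₂T₁
      have hf₁T₀ : f₁ ∈ T₀ ∩ E := Finset.mem_inter.mpr ⟨hT₀₁ ▸ hf₁T₁, hf₁.1⟩
      rw [single_inter hc1 heT₀ heE, Finset.mem_singleton] at hf₁T₀
      exact absurd (hf₁T₀ ▸ hf₁.2) hze
  have hT₁c2 : (T₁ ∩ E).card = 2 := by
    have hsub2 : ({f₁, f₂} : Finset (Sym2 V)) ⊆ T₁ ∩ E := by
      intro f hf
      simp only [Finset.mem_insert, Finset.mem_singleton] at hf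
      rcases hf with rfl | rfl
      · exact Finset.mem_inter.mpr ⟨hf₁T₁, hf₁.1⟩
      · exact Finset.mem_inter.mpr ⟨hf₂T₁, hf₂.1⟩
    have hge : 2 ≤ (T₁ ∩ E).card := by
      rw [← Finset.card_pair hf12]
      exact Finset.card_le_card hsub2
    have hle : (T₁ ∩ E).card ≤ 3 :=
      le_trans (Finset.card_le_card Finset.inter_subset_left) (le_of_eq (tri_card h𝒯 hT₁))
    have := hno3 T₁ hT₁
    omega
  refine ⟨T₁, ⟨hT₁, hT₁c2⟩, Or.inr ⟨T₀, x, y, z, hT₀, hc1, hexy, heT₀, hxzT, hyzT,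
    Ne.symm hxz, Ne.symm hyz, ?_⟩⟩
  rw [hIm]
  intro f hf
  simp only [Finset.mem_insert, Finset.mem_singleton] at hf
  rcases hf with rfl | rfl
  exacts [hf₁T₁, hf₂T₁]

lemma unique_q (h𝒯 : IsTrianglePartition G 𝒯) (hreg : ∀ v : V, G.degree v = 4)
    (hE : E ⊆ G.edgeFinset) (hI : ∀ v : V, (E.filter (fun f => v ∈ f)).card = 2)
    {T : Finset (Sym2 V)} {e e' : Sym2 V} (hT : T ∈ 𝒯) (hc2 : (T ∩ E).card = 2)
    (heE : e ∈ E) (he'E : e' ∈ E) (hq : QRel 𝒯 E e T) (hq' : QRel 𝒯 E e' T) : e = e' := by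
  obtain ⟨T', a, b, m, hT', hc1, he, heT', ham, hbm, hma, hmb, hsub⟩ := hq
  obtain ⟨T'', a', b', m', hT'', hc1', he', heT'', ham', hbm', hma', hmb', hsub'⟩ := hq'
  have hImT : E.filter (fun f => m ∈ f) = T ∩ E :=
    Finset.eq_of_subset_of_card_le
      (fun f hf => Finset.mem_inter.mpr ⟨hsub hf, (Finset.mem_filter.mp hf).1⟩)
      (by rw [hc2, hI m])
  have hImT' : E.filter (fun f => m' ∈ f) = T ∩ E :=
    Finset.eq_of_subset_of_card_le
      (fun f hf => Finset.mem_inter.mpr ⟨hsub' hf, (Finset.mem_filter.mp hf).1⟩)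
      (by rw [hc2, hI m'])
  have hmm : m = m' := by
    by_contra hne
    obtain ⟨f₁, f₂, hf12, hTE⟩ := Finset.card_eq_two.mp hc2
    have hboth : ∀ f ∈ T ∩ E, f = s(m, m') := by
      intro f hf
      have h1 : m ∈ f := (Finset.mem_filter.mp
        (show f ∈ E.filter (fun f => m ∈ f) by rw [hImT]; exact hf)).2
      have h2 : m' ∈ f := (Finset.mem_filter.mp
        (show f ∈ E.filter (fun f => m' ∈ f) by rw [hImT']; exact hf)).2
      obtain ⟨c, hc⟩ := Sym2.mem_iff_exists.mp h1
      rw [hc, Sym2.mem_iff] at h2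
      rcases h2 with h2 | h2
      · exact absurd h2.symm hne
      · rw [hc, h2]
    have hm1 : f₁ = s(m, m') := hboth f₁ (by rw [hTE]; simp)
    have hm2 : f₂ = s(m, m') := hboth f₂ (by rw [hTE]; simp)
    exact hf12 (hm1.trans hm2.symm)
  subst hmm
  have hsma'E : s(m, a') ∉ E := by
    intro hmem
    have hswap : s(m, a') = s(a', m) := Sym2.eq_swap
    rw [hswap] at hmem
    have hin : s(a', m) ∈ T'' ∩ E := Finset.mem_inter.mpr ⟨ham', hmem⟩
    rw [single_inter hc1' heT'' he'E, Finset.mem_singleton, he'] at hin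
    exact hmb' (Sym2.congr_right.mp hin)
  have hadj : G.Adj m a' := (adj_of_mem_tri h𝒯 hT'' ham').symm
  have hcase := apex_nbr h𝒯 hreg hE hI hT' hc1 he heT' heE ham hbm hma hmb hadj hsma'E
  have hsma'T' : s(a', m) ∈ T' := by
    rcases hcase with h | h
    · rw [h]; exact ham
    · rw [h]; exact hbm
  have hTT : T' = T'' := tri_unique h𝒯 hT' hT'' hsma'T' ham'
  have h1 : e' ∈ T' ∩ E := Finset.mem_inter.mpr ⟨hTT ▸ heT'', he'E⟩
  rw [single_inter hc1 heT' heE, Finset.mem_singleton] at h1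
  exact h1.symm

lemma master (h𝒯 : IsTrianglePartition G 𝒯) (hreg : ∀ v : V, G.degree v = 4)
    (hE : E ⊆ G.edgeFinset) (hI : ∀ v : V, (E.filter (fun f => v ∈ f)).card = 2)
    (hno3 : ∀ T ∈ 𝒯, (T ∩ E).card ≠ 3) :
    E.card ≤ 3 * (𝒯.filter (fun T => (T ∩ E).card = 2)).card := by
  classical
  have hex : ∀ e : Sym2 V, ∃ T, e ∈ E →
      ((T ∈ 𝒯 ∧ (T ∩ E).card = 2) ∧ (e ∈ T ∨ QRel 𝒯 E e T)) := by
    intro e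
    by_cases he : e ∈ E
    · obtain ⟨T, hT⟩ := exists_good h𝒯 hreg hE hI hno3 he
      exact ⟨T, fun _ => hT⟩
    · exact ⟨∅, fun h => absurd h he⟩
  choose g hg using hex
  apply Finset.card_le_mul_card_image_of_maps_to (f := g)
  · intro e he
    rw [Finset.mem_filter]
    exact ⟨(hg e he).1.1, (hg e he).1.2⟩
  · intro T hT
    rw [Finset.mem_filter] at hT
    have hsplit := Finset.card_filter_add_card_filter_not
      (s := E.filter (fun e => g e = T)) (p := fun e => e ∈ T)
    have h1 : ((E.filter (fun e => g e = T)).filter (fun e => e ∈ T)).card ≤ 2 := by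
      rw [← hT.2]
      apply Finset.card_le_card
      intro f hf
      rw [Finset.mem_filter, Finset.mem_filter] at hf
      exact Finset.mem_inter.mpr ⟨hf.2, hf.1.1⟩
    have h2 : ((E.filter (fun e => g e = T)).filter (fun e => ¬(e ∈ T))).card ≤ 1 := by
      rw [Finset.card_le_one]
      intro e he f hf
      rw [Finset.mem_filter, Finset.mem_filter] at he hf
      have hqe : QRel 𝒯 E e T := by
        have := (hg e he.1.1).2
        rw [he.1.2] at this
        exact this.resolve_left he.2
      have hqf : QRel 𝒯 E f T := by
        have := (hg f hf.1.1).2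
        rw [hf.1.2] at this
        exact this.resolve_left hf.2
      exact unique_q h𝒯 hreg hE hI hT.1 hT.2 he.1.1 hf.1.1 hqe hqf
    omega

end Master


/-- If `G` is a `4`-regular graph on `n ≥ 4` vertices whose edges are partitioned into the
family `𝒯` of triangles and `C` is a Hamilton cycle of `G`, and `τ₂` denotes the number
of triangles of `𝒯` containing exactly two edges of `C`, then `3 * τ₂ ≥ n`. -/
theorem three_tau_two_ge_n {V : Type*} [Fintype V] [DecidableEq V]
    (G : SimpleGraph V) [DecidableRel G.Adj]
    (hn : 4 ≤ Fintype.card V)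
    (hreg : ∀ v : V, G.degree v = 4)
    (𝒯 : Finset (Finset (Sym2 V))) (h𝒯 : IsTrianglePartition G 𝒯)
    (u : V) (C : G.Walk u u) (hC : C.IsHamiltonianCycle)
    (τ₂ : ℕ)
    (hτ₂ : τ₂ = (𝒯.filter (fun T => (T ∩ C.edges.toFinset).card = 2)).card) :
    Fintype.card V ≤ 3 * τ₂ := by
  have hnd : C.edges.Nodup := hC.isCycle.edges_nodup
  have hcardE : C.edges.toFinset.card = Fintype.card V := by
    rw [List.toFinset_card_of_nodup hnd, SimpleGraph.Walk.length_edges, hC.length_eq]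
  have hEsub : C.edges.toFinset ⊆ G.edgeFinset := by
    intro e he
    rw [List.mem_toFinset] at he
    exact SimpleGraph.mem_edgeFinset.mpr (C.edges_subset_edgeSet he)
  have hI : ∀ v : V, (C.edges.toFinset.filter (fun f => v ∈ f)).card = 2 :=
    cycle_incidence hC
  have hno3 : ∀ T ∈ 𝒯, (T ∩ C.edges.toFinset).card ≠ 3 := by
    intro T hT h3
    have hcardT := tri_card h𝒯 hT
    have hTE : T ∩ C.edges.toFinset = T :=
      Finset.eq_of_subset_of_card_le Finset.inter_subset_left (by omega)
    have hTsub : T ⊆ C.edges.toFinset := by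
      rw [← hTE]; exact Finset.inter_subset_right
    obtain ⟨a, b, c, hab, hac, hbc, _, _, _, hTset⟩ := h𝒯.1 T hT
    have h1 : s(a, b) ∈ C.edges := by
      rw [← List.mem_toFinset]
      exact hTsub (by rw [hTset]; simp)
    have h2 : s(b, c) ∈ C.edges := by
      rw [← List.mem_toFinset]
      exact hTsub (by rw [hTset]; simp)
    have h3' : s(a, c) ∈ C.edges := by
      rw [← List.mem_toFinset]
      exact hTsub (by rw [hTset]; simp)
    exact no_three_edges hC hn hab hac hbc h1 h2 h3'
  calc Fintype.card V = C.edges.toFinset.card := hcardE.symm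
    _ ≤ 3 * (𝒯.filter (fun T => (T ∩ C.edges.toFinset).card = 2)).card :=
        master h𝒯 hreg hEsub hI hno3
    _ = 3 * τ₂ := by rw [hτ₂]
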